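/- Let Γ, Γ' be almost conjugate subgroups of a finite group G (i.e. there is a bijection Γ → Γ' preserving G-conjugacy). Then for every finite-dimensional complex representation (π, V) of G, the dimensions of the fixed subspaces coincide: dim V^Γ = dim V^{Γ'}. -/
import Mathlib

open Finset Module

/-- Sum over a subgroup grouped by conjugacy classes. -/
lemma sum_subgroup_classes {G : Type*} [Group G] [Fintype G] (Δ : Subgroup G)
    [Fintype Δ] [Fintype (ConjClasses G)] {M : Type*} [AddCommMonoid M] (f : G → M)
    (hf : ∀ g h : G, IsConj g h → f g = f h) :
    ∑ γ : Δ, f γ =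
      ∑ c : ConjClasses G,
        {x ∈ (Δ : Set G) | IsConj c.exists_rep.choose x}.ncard • f c.exists_rep.choose := by
  classical
  rw [← Finset.sum_subtype (Set.toFinset (Δ : Set G))
    (fun x => by simp [Set.mem_toFinset]) f,
    ← Finset.sum_fiberwise (Set.toFinset (Δ : Set G)) (fun x => ConjClasses.mk x) f]
  refine Finset.sum_congr rfl fun c _ => ?_
  have hrep : ConjClasses.mk c.exists_rep.choose = c := c.exists_rep.choose_spec
  have hset : {x ∈ (Δ : Set G) | IsConj c.exists_rep.choose x} =
      ↑((Set.toFinset (Δ : Set G)).filter fun x => ConjClasses.mk x = c) := by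
    ext x
    simp only [Set.mem_setOf_eq, Finset.coe_filter, Set.mem_toFinset, SetLike.mem_coe]
    refine and_congr_right fun _ => ?_
    constructor
    · intro h
      rw [← hrep, ConjClasses.mk_eq_mk_iff_isConj]
      exact h.symm
    · intro h
      rw [← hrep, ConjClasses.mk_eq_mk_iff_isConj] at h
      exact h.symm
  rw [hset, Set.ncard_coe_finset, ← Finset.sum_const]
  refine Finset.sum_congr rfl fun x hx => ?_
  simp only [Finset.mem_filter, Set.mem_toFinset] at hx
  exact hf _ _ ((ConjClasses.mk_eq_mk_iff_isConj).mp (by rw [hrep, hx.2]))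

/-- Sums of class functions over almost conjugate subgroups coincide. -/
lemma sum_eq_of_almostConj {G : Type*} [Group G] [Fintype G] (Γ Γ' : Subgroup G)
    [Fintype Γ] [Fintype Γ']
    (halmost : ∀ g : G, {x ∈ (Γ : Set G) | IsConj g x}.ncard =
      {x ∈ (Γ' : Set G) | IsConj g x}.ncard)
    {M : Type*} [AddCommMonoid M] (f : G → M) (hf : ∀ g h : G, IsConj g h → f g = f h) :
    ∑ γ : Γ, f γ = ∑ γ : Γ', f γ := by
  haveI : Fintype (ConjClasses G) := Fintype.ofFinite _
  rw [sum_subgroup_classes Γ f hf, sum_subgroup_classes Γ' f hf]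
  refine Finset.sum_congr rfl fun c _ => ?_
  rw [halmost]

/-- If `Γ, Γ'` are almost conjugate subgroups of a finite group `G` (each `G`-conjugacy
class meets `Γ` and `Γ'` in the same number of elements), then for every finite-dimensional
complex representation `(π, V)` of `G` the fixed subspaces have the same dimension. -/
theorem almostConjugate_dim_invariants_eq (G : Type*) [Group G] [Fintype G]
    (Γ Γ' : Subgroup G)
    (halmost : ∀ g : G, {x ∈ (Γ : Set G) | IsConj g x}.ncard =
      {x ∈ (Γ' : Set G) | IsConj g x}.ncard)
    (V : Type*) [AddCommGroup V] [Module ℂ V] [FiniteDimensional ℂ V]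
    (π : Representation ℂ G V) :
    Module.finrank ℂ (Representation.invariants (π.comp Γ.subtype)) =
      Module.finrank ℂ (Representation.invariants (π.comp Γ'.subtype)) := by
  classical
  haveI : Fintype Γ := Fintype.ofFinite _
  haveI : Fintype Γ' := Fintype.ofFinite _
  -- |Γ| = |Γ'|
  have hcard : (Fintype.card Γ : ℂ) = (Fintype.card Γ' : ℂ) := by
    have := sum_eq_of_almostConj Γ Γ' halmost (fun _ => (1 : ℂ)) (fun _ _ _ => rfl)
    simpa [Finset.sum_const, Finset.card_univ] using this
  -- average formula for each subgroup
  have key : ∀ (Δ : Subgroup G) (_ : Fintype Δ),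
      (Fintype.card Δ : ℂ) • (finrank ℂ (Representation.invariants (π.comp Δ.subtype)) : ℂ)
        = ∑ γ : Δ, LinearMap.trace ℂ V (π γ) := by
    intro Δ _
    haveI hinv : Invertible (Fintype.card Δ : ℂ) :=
      invertibleOfNonzero (by exact_mod_cast Fintype.card_ne_zero)
    have h := (Representation.isProj_averageMap (π.comp Δ.subtype)).trace
    have havg : Representation.averageMap (π.comp Δ.subtype) =
        (⅟(Fintype.card Δ : ℂ)) • ∑ g : Δ, (π.comp Δ.subtype) g := by
      show Representation.asAlgebraHom _ (GroupAlgebra.average ℂ Δ) = _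
      rw [GroupAlgebra.average, map_smul, map_sum]
      congr 1
      refine Finset.sum_congr rfl fun g _ => ?_
      rw [MonoidAlgebra.of_apply, ← Representation.asAlgebraHom_single_one]
    rw [havg, map_smul, map_sum] at h
    rw [← h, smul_smul, mul_invOf_self, one_smul]
    rfl
  have hΓ := key Γ ‹_›
  have hΓ' := key Γ' ‹_›
  have hsum : ∑ γ : Γ, LinearMap.trace ℂ V (π γ) = ∑ γ : Γ', LinearMap.trace ℂ V (π γ) := by
    refine sum_eq_of_almostConj Γ Γ' halmost (fun g => LinearMap.trace ℂ V (π g)) fun g h hc => ?_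
    rw [isConj_iff] at hc
    obtain ⟨u, rfl⟩ := hc
    simp only [map_mul]
    rw [LinearMap.trace_mul_comm, ← mul_assoc, ← map_mul, inv_mul_cancel, map_one, one_mul]
  have heq : (Fintype.card Γ : ℂ) • (finrank ℂ (Representation.invariants (π.comp Γ.subtype)) : ℂ)
      = (Fintype.card Γ : ℂ) •
        (finrank ℂ (Representation.invariants (π.comp Γ'.subtype)) : ℂ) := by
    rw [hΓ, hcard, hΓ', hsum]
  have hne : (Fintype.card Γ : ℂ) ≠ 0 := by exact_mod_cast Fintype.card_ne_zero
  rw [smul_eq_mul, smul_eq_mul] at heq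
  exact_mod_cast mul_left_cancel₀ hne heq
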